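/- For n-th harmonic generation (N = M = m_1 = 1, n_1 = n), the reduced operator H_{1,red} = ζ^{−1} Π_{j=0}^{n−1}(ε − j + n ζ∂_ζ) + ζ (r − ζ∂_ζ) acting on polynomials of degree ≤ r equals n^n J⁻ Π_{j=0, j≠ε}^{n−1} (J⁰ + (ε−j)/n + r/2) − J⁺, where J⁺ = ζ²∂_ζ − rζ, J⁰ = ζ∂_ζ − r/2, J⁻ = ∂_ζ. -/

import Mathlib

open Polynomial

/-- The Euler operator `ζ∂_ζ`. -/
noncomputable def euler : Module.End ℝ (Polynomial ℝ) :=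
  (LinearMap.mulLeft ℝ (X : Polynomial ℝ)).comp derivative

/-- `J⁻ = ∂_ζ`. -/
noncomputable def Jm : Module.End ℝ (Polynomial ℝ) := derivative

/-- `J⁰ = ζ∂_ζ - r/2`. -/
noncomputable def J0 (r : ℝ) : Module.End ℝ (Polynomial ℝ) := euler - (r / 2) • 1

/-- `J⁺ = ζ²∂_ζ - rζ`. -/
noncomputable def Jp (r : ℝ) : Module.End ℝ (Polynomial ℝ) :=
  (LinearMap.mulLeft ℝ ((X : Polynomial ℝ) ^ 2)).comp derivative -
    r • LinearMap.mulLeft ℝ (X : Polynomial ℝ)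

/-- The reduced Hamiltonian for `n`-th harmonic generation:
`H₁,red = ζ⁻¹ Π_{j=0}^{n-1} (ε - j + n ζ∂_ζ) + ζ (r - ζ∂_ζ)` (the `ζ⁻¹` implemented by
`Polynomial.divX`). -/
noncomputable def H1redHarm (n ε r : ℕ) (P : Polynomial ℝ) : Polynomial ℝ :=
  divX ((Polynomial.aeval euler
      (∏ j ∈ Finset.range n, ((n : ℝ) • X + C ((ε : ℝ) - j)))) P) +
    X * ((r : ℝ) • P - euler P)

private lemma divX_smul' (a : ℝ) (p : Polynomial ℝ) : divX (a • p) = a • divX p := by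
  ext k; simp [coeff_divX]

private lemma eigen_pow (f : Module.End ℝ (Polynomial ℝ)) (c : ℝ) (v : Polynomial ℝ)
    (h : f v = c • v) (m : ℕ) : (f ^ m) v = c ^ m • v := by
  induction m with
  | zero => simp
  | succ m ih =>
      rw [pow_succ, Module.End.mul_apply, h, map_smul, ih, smul_smul, pow_succ]
      ring_nf

private lemma aeval_eigen (f : Module.End ℝ (Polynomial ℝ)) (c : ℝ) (v : Polynomial ℝ)
    (h : f v = c • v) (q : Polynomial ℝ) :
    (Polynomial.aeval f q) v = q.eval c • v := by
  induction q using Polynomial.induction_on' with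
  | add p q hp hq => simp [hp, hq, add_smul]
  | monomial m a =>
      simp [aeval_monomial, Module.End.mul_apply, eigen_pow f c v h,
        Module.algebraMap_end_apply, eval_monomial, smul_smul, mul_comm]

private lemma euler_X_pow (k : ℕ) : euler ((X : Polynomial ℝ) ^ k) = (k : ℝ) • X ^ k := by
  cases k with
  | zero => simp [euler]
  | succ m =>
      simp only [euler, LinearMap.comp_apply, LinearMap.mulLeft_apply, derivative_X_pow,
        Nat.add_sub_cancel, smul_eq_C_mul]
      push_cast
      ring

private lemma J0_X_pow (r : ℝ) (k : ℕ) :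
    J0 r ((X : Polynomial ℝ) ^ k) = ((k : ℝ) - r / 2) • X ^ k := by
  simp [J0, euler_X_pow, sub_smul]

private lemma prod_identity (n ε : ℕ) (hn : 1 ≤ n) (hε : ε < n) (k : ℝ) :
    (∏ j ∈ Finset.range n, ((n : ℝ) * k + ((ε : ℝ) - j))) =
      (n : ℝ) ^ n * (∏ j ∈ (Finset.range n).erase ε, (k + ((ε : ℝ) - j) / n)) * k := by
  have hn0 : (n : ℝ) ≠ 0 := Nat.cast_ne_zero.2 (by omega)
  rw [← Finset.mul_prod_erase _ _ (Finset.mem_range.2 hε)]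
  have hcard : ((Finset.range n).erase ε).card = n - 1 := by
    rw [Finset.card_erase_of_mem (Finset.mem_range.2 hε), Finset.card_range]
  have h1 : (∏ j ∈ (Finset.range n).erase ε, ((n : ℝ) * k + ((ε : ℝ) - j))) =
      ∏ j ∈ (Finset.range n).erase ε, ((n : ℝ) * (k + ((ε : ℝ) - j) / n)) :=
    Finset.prod_congr rfl fun j _ => by field_simp
  rw [h1, Finset.prod_mul_distrib, Finset.prod_const, hcard]
  have h2 : (n : ℝ) ^ n = (n : ℝ) ^ (n - 1) * n := by
    rw [← pow_succ]; congr 1; omega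
  rw [h2]
  simp only [sub_self, add_zero]
  ring

private lemma key (n ε r k : ℕ) (hn : 1 ≤ n) (hε : ε < n) :
    H1redHarm n ε r ((X : Polynomial ℝ) ^ k) =
      ((n : ℝ) ^ n •
        (Jm * Polynomial.aeval (J0 (r : ℝ))
          (∏ j ∈ (Finset.range n).erase ε,
            (X + C (((ε : ℝ) - j) / n + (r : ℝ) / 2)))) - Jp (r : ℝ)) ((X : Polynomial ℝ) ^ k) := by
  have hL := aeval_eigen euler (k : ℝ) (X ^ k) (euler_X_pow k)
    (∏ j ∈ Finset.range n, ((n : ℝ) • X + C ((ε : ℝ) - j)))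
  have hR := aeval_eigen (J0 (r : ℝ)) ((k : ℝ) - r / 2) (X ^ k) (J0_X_pow r k)
    (∏ j ∈ (Finset.range n).erase ε, (X + C (((ε : ℝ) - j) / n + (r : ℝ) / 2)))
  rw [H1redHarm, hL]
  simp only [LinearMap.sub_apply, LinearMap.smul_apply, Module.End.mul_apply, hR]
  rw [eval_prod]
  simp only [eval_add, eval_smul, eval_C, eval_X, smul_eq_mul]
  have hd : (∏ j ∈ (Finset.range n).erase ε,
      (((k : ℝ) - r / 2) + (((ε : ℝ) - j) / n + (r : ℝ) / 2))) =
      ∏ j ∈ (Finset.range n).erase ε, ((k : ℝ) + ((ε : ℝ) - j) / n) := by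
    refine Finset.prod_congr rfl fun j _ => by ring
  rw [eval_prod]
  simp only [eval_add, eval_C, eval_X]
  rw [hd]
  rw [prod_identity n ε hn hε (k : ℝ)]
  set d := ∏ j ∈ (Finset.range n).erase ε, ((k : ℝ) + ((ε : ℝ) - j) / n) with hdd
  clear_value d
  rw [divX_smul']
  simp only [euler_X_pow, Jm, Jp, LinearMap.sub_apply, LinearMap.comp_apply,
    LinearMap.smul_apply, LinearMap.mulLeft_apply, map_smul, derivative_X_pow, divX_X_pow]
  cases k with
  | zero =>
      simp only [Nat.cast_zero, mul_zero, zero_smul, smul_zero, C_0, zero_mul, pow_zero,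
        mul_one, sub_zero, zero_sub, neg_neg, zero_add, mul_smul_comm]
  | succ m =>
      simp only [Nat.add_sub_cancel, Nat.succ_ne_zero, if_false]
      simp only [smul_eq_C_mul]
      push_cast
      simp only [C_add, C_mul, C_pow, C_1]
      ring

private lemma H1_smul (n ε r : ℕ) (a : ℝ) (p : Polynomial ℝ) :
    H1redHarm n ε r (a • p) = a • H1redHarm n ε r p := by
  unfold H1redHarm
  rw [map_smul, divX_smul', map_smul, smul_add]
  congr 1
  have h : (r : ℝ) • (a • p) - a • euler p = a • ((r : ℝ) • p - euler p) := by module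
  rw [h, mul_smul_comm]

/-- on polynomials of degree at most `r`, the reduced operator for `n`-th harmonic
generation equals `n^n J⁻ Π_{j≠ε} (J⁰ + (ε-j)/n + r/2) - J⁺`. -/
theorem harmonic_generation_sl2_form (n ε r : ℕ) (hn : 1 ≤ n) (hε : ε < n) :
    ∀ P ∈ degreeLE ℝ (r : ℕ),
      H1redHarm n ε r P =
        ((n : ℝ) ^ n •
          (Jm * Polynomial.aeval (J0 (r : ℝ))
            (∏ j ∈ (Finset.range n).erase ε,
              (X + C (((ε : ℝ) - j) / n + (r : ℝ) / 2)))) - Jp (r : ℝ)) P := by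
  intro P hP
  rw [degreeLE_eq_span_X_pow] at hP
  induction hP using Submodule.span_induction with
  | mem x hx =>
      simp only [Finset.coe_image, Set.mem_image, Finset.mem_coe] at hx
      obtain ⟨i, _, rfl⟩ := hx
      exact key n ε r i hn hε
  | zero =>
      rw [map_zero]
      simp only [H1redHarm, map_zero, divX_zero, smul_zero, zero_sub, neg_zero, mul_zero,
        add_zero, zero_add]
  | add x y hx hy ihx ihy =>
      rw [map_add, ← ihx, ← ihy]
      simp only [H1redHarm, map_add, divX_add, smul_add]
      ring
  | smul a x hx ihx =>
      rw [map_smul, H1_smul, ihx]
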